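/- Let C be an [n,k,d] linear code over GF(q) with locality l, meaning every coordinate of a codeword can be recovered as a function of at most l other coordinates. Then d ≤ n − k + 2 − ⌈k/l⌉. -/

import Mathlib

open Finset

section Stmt10Aux
open Module Submodule

namespace Stmt10Aux

variable {F : Type*} [Field F] {n : ℕ}

/-- coordinate functional on the code -/
noncomputable def phi (C : Submodule F (Fin n → F)) (i : Fin n) : Module.Dual F C :=
  (LinearMap.proj i).comp C.subtype

@[simp] lemma phi_apply (C : Submodule F (Fin n → F)) (i : Fin n) (c : C) :
    phi C i c = (c : Fin n → F) i := rfl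

/-- rank of a set of coordinates -/
noncomputable def rk (C : Submodule F (Fin n → F)) (S : Finset (Fin n)) : ℕ :=
  Module.finrank F (Submodule.span F (phi C '' ↑S))

variable (C : Submodule F (Fin n → F))

lemma rk_mono {S T : Finset (Fin n)} (h : S ⊆ T) : rk C S ≤ rk C T :=
  Submodule.finrank_mono (span_mono (Set.image_mono (by exact_mod_cast h)))

lemma rk_union_le (S T : Finset (Fin n)) : rk C (S ∪ T) ≤ rk C S + T.card := by
  classical
  unfold rk
  rw [Finset.coe_union, Set.image_union, Submodule.span_union]
  refine le_trans (Submodule.finrank_add_le_finrank_add_finrank _ _) ?_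
  have h1 : phi C '' ↑T = ↑(T.image (phi C)) := (Finset.coe_image).symm
  rw [h1]
  exact add_le_add le_rfl
    (le_trans (finrank_span_finset_le_card _) (Finset.card_image_le))

lemma rk_empty : rk C ∅ = 0 := by
  unfold rk
  simp [Submodule.span_empty]

lemma rk_le_card (S : Finset (Fin n)) : rk C S ≤ S.card := by
  have := rk_union_le C ∅ S
  simpa [rk_empty] using this

lemma prefix_lemma : ∀ (R S : Finset (Fin n)) (t : ℕ), rk C S ≤ t → t < rk C (S ∪ R) →
    ∃ P, P ⊂ R ∧ rk C (S ∪ P) = t := by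
  classical
  intro R
  induction R using Finset.induction_on with
  | empty =>
    intro S t h1 h2
    rw [Finset.union_empty] at h2
    omega
  | @insert j R hj ih =>
    intro S t h1 h2
    by_cases hc : t < rk C (S ∪ R)
    · obtain ⟨P, hP, hr⟩ := ih S t h1 hc
      exact ⟨P, hP.trans_subset (Finset.subset_insert j R), hr⟩
    · push_neg at hc
      have key : rk C (S ∪ insert j R) ≤ rk C (S ∪ R) + 1 := by
        have : S ∪ insert j R = (S ∪ R) ∪ {j} := by
          ext x; simp [Finset.mem_insert, Finset.mem_union]
        rw [this]
        simpa using rk_union_le C (S ∪ R) {j}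
      have : rk C (S ∪ R) = t := by omega
      exact ⟨R, Finset.ssubset_insert hj, this⟩

lemma main (k l : ℕ) (hl : 0 < l) (hk : 0 < k)
    (hlocal : ∀ i : Fin n, ∃ R : Finset (Fin n), i ∉ R ∧ R.card ≤ l ∧
      phi C i ∈ span F (phi C '' ↑R))
    (hex : ∀ S : Finset (Fin n), rk C S < k → ∃ i, phi C i ∉ span F (phi C '' ↑S)) :
    ∀ (m : ℕ) (S : Finset (Fin n)), rk C S ≤ k - 1 → k - 1 - rk C S ≤ m →
    ∃ T : Finset (Fin n), rk C T ≤ k - 1 ∧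
      (k - 1) + (S.card - rk C S) + (k - rk C S + l - 1) / l ≤ T.card + 1 := by
  classical
  have base : ∀ S : Finset (Fin n), rk C S = k - 1 →
      ∃ T : Finset (Fin n), rk C T ≤ k - 1 ∧
      (k - 1) + (S.card - rk C S) + (k - rk C S + l - 1) / l ≤ T.card + 1 := by
    intro S hS
    refine ⟨S, le_of_eq hS, ?_⟩
    have h1 : rk C S ≤ S.card := rk_le_card C S
    have h2 : k - rk C S + l - 1 = l := by omega
    rw [h2, Nat.div_self hl]
    omega
  intro m
  induction m with
  | zero =>
    intro S hS hm
    exact base S (by omega)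
  | succ m ih =>
    intro S hS hm
    rcases eq_or_lt_of_le hS with heq | hlt
    · exact base S heq
    -- rk C S < k - 1
    obtain ⟨i, hi⟩ := hex S (by omega)
    obtain ⟨R, hiR, hRl, hispan⟩ := hlocal i
    have hiS : i ∉ S := by
      intro h
      exact hi (Submodule.subset_span (Set.mem_image_of_mem _ (by exact_mod_cast h)))
    set R' : Finset (Fin n) := R \ S with hR'
    have hSR' : S ∪ R = S ∪ R' := (Finset.union_sdiff_self_eq_union).symm
    have hdisj : Disjoint S R' := Finset.disjoint_sdiff
    have hcardR' : R'.card ≤ l := le_trans (Finset.card_le_card (Finset.sdiff_subset)) hRl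
    set S' : Finset (Fin n) := insert i (S ∪ R) with hS'def
    -- rk S' = rk (S ∪ R)
    have hspan_i : phi C i ∈ span F (phi C '' ↑(S ∪ R)) := by
      refine Submodule.span_mono (Set.image_mono ?_) hispan
      intro x hx
      simp only [Finset.coe_union, Set.mem_union]
      exact Or.inr hx
    have hrkS' : rk C S' = rk C (S ∪ R) := by
      unfold rk
      rw [hS'def, Finset.coe_insert, Set.image_insert_eq,
        Submodule.span_insert_eq_span hspan_i]
    -- rk S < rk S'
    have hlt' : rk C S < rk C S' := by
      have hle : span F (phi C '' ↑S) ≤ span F (phi C '' ↑S') := by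
        refine Submodule.span_mono (Set.image_mono ?_)
        intro x hx
        simp only [hS'def, Finset.coe_insert, Set.mem_insert_iff, Finset.coe_union,
          Set.mem_union]
        tauto
      have hmem : phi C i ∈ span F (phi C '' ↑S') := by
        refine Submodule.subset_span (Set.mem_image_of_mem _ ?_)
        simp [hS'def]
      exact Submodule.finrank_lt_finrank_of_lt (lt_of_le_of_ne hle (by
        intro h; rw [h] at hi; exact hi hmem))
    have hrk_union_le : rk C (S ∪ R) ≤ rk C S + R'.card := by
      rw [hSR']
      exact rk_union_le C S R'
    have hiR' : i ∉ S ∪ R := by simp [Finset.mem_union, hiS, hiR]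
    have hcardS' : S'.card = S.card + R'.card + 1 := by
      rw [hS'def, Finset.card_insert_of_notMem hiR', hSR',
        Finset.card_union_of_disjoint hdisj]
    have hrkcard : rk C S ≤ S.card := rk_le_card C S
    by_cases hcase : rk C S' ≤ k - 1
    · -- Case A: recurse
      have hrkS'card : rk C S' ≤ S'.card := rk_le_card C S'
      obtain ⟨T, hT1, hT2⟩ := ih S' hcase (by omega)
      refine ⟨T, hT1, ?_⟩
      -- div comparison
      have hq : (k - rk C S + l - 1) / l ≤ (k - rk C S' + l - 1) / l + 1 := by
        have h1 : k - rk C S + l - 1 ≤ (k - rk C S' + l - 1) + l := by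
          have : rk C S' ≤ rk C S + l := by omega
          omega
        calc (k - rk C S + l - 1) / l ≤ ((k - rk C S' + l - 1) + l) / l :=
              Nat.div_le_div_right h1
          _ = (k - rk C S' + l - 1) / l + 1 := Nat.add_div_right _ hl
      omega
    · -- Case B: prefix lemma
      push_neg at hcase
      rw [hrkS', hSR'] at hcase
      obtain ⟨P, hPss, hPrk⟩ := prefix_lemma C R' S (k - 1) hS hcase
      have hPsub : P ⊆ R' := hPss.subset
      have hPdisj : Disjoint S P := hdisj.mono_right hPsub
      refine ⟨S ∪ P, le_of_eq hPrk, ?_⟩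
      have hcardSP : (S ∪ P).card = S.card + P.card :=
        Finset.card_union_of_disjoint hPdisj
      have hrkSP : rk C (S ∪ P) ≤ rk C S + P.card := rk_union_le C S P
      have hPlt : P.card < R'.card := Finset.card_lt_card hPss
      -- so k - rk C S ≤ l, hence ceiling term ≤ 1
      have hkr : k - rk C S ≤ l := by omega
      have hq1 : (k - rk C S + l - 1) / l ≤ 1 := by
        have : k - rk C S + l - 1 < 2 * l := by omega
        have := Nat.div_lt_iff_lt_mul hl |>.mpr (by omega : k - rk C S + l - 1 < 2 * l)
        omega
      omega

lemma vanish (k : ℕ) (hdim : Module.finrank F C = k) (S : Finset (Fin n)) (h : rk C S < k) :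
    ∃ c : C, c ≠ 0 ∧ ∀ φ ∈ span F (phi C '' ↑S), φ c = 0 := by
  have heq := Subspace.finrank_add_finrank_dualCoannihilator_eq (span F (phi C '' ↑S))
  rw [hdim] at heq
  have hne : (span F (phi C '' ↑S)).dualCoannihilator ≠ ⊥ := by
    intro hbot
    rw [hbot] at heq
    simp only [finrank_bot, add_zero] at heq
    unfold rk at h; omega
  obtain ⟨c, hc, hc0⟩ := Submodule.exists_mem_ne_zero_of_ne_bot hne
  exact ⟨c, hc0, (Submodule.mem_dualCoannihilator _).1 hc⟩

end Stmt10Aux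

end Stmt10Aux

/-- Gopalan–Huang–Simitci–Yekhanin bound: If C is an [n,k,d]
linear code over GF(q) with locality l — every coordinate i is a function of the
restriction of the codeword to some set R_i of at most l other coordinates —
then d ≤ n − k + 2 − ⌈k/l⌉. -/
theorem stmt10 {F : Type*} [Field F] [Fintype F] [DecidableEq F] {n k l d : ℕ}
    (hl : 0 < l) (hk : 0 < k)
    (C : Submodule F (Fin n → F)) (hdim : Module.finrank F C = k)
    (hloc : ∀ i : Fin n, ∃ R : Finset (Fin n), i ∉ R ∧ R.card ≤ l ∧
      ∃ f : (Fin n → F) → F, ∀ c ∈ C, c i = f (fun x => if x ∈ R then c x else 0))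
    (hd : d = sInf { t : ℕ | ∃ c ∈ C, c ≠ 0 ∧
      t = (univ.filter (fun x : Fin n => c x ≠ 0)).card }) :
    (d : ℤ) ≤ (n : ℤ) - (k : ℤ) + 2 - ⌈(k : ℚ) / (l : ℚ)⌉ := by

  classical
  open Stmt10Aux in
  -- locality in dual form
  have hlocal : ∀ i : Fin n, ∃ R : Finset (Fin n), i ∉ R ∧ R.card ≤ l ∧
      Stmt10Aux.phi C i ∈ Submodule.span F (Stmt10Aux.phi C '' ↑R) := by
    intro i
    obtain ⟨R, hiR, hRl, f, hf⟩ := hloc i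
    refine ⟨R, hiR, hRl, ?_⟩
    have h0 : f (fun _ => (0 : F)) = 0 := by
      have h := hf 0 C.zero_mem
      have he : (fun x => if x ∈ R then (0 : Fin n → F) x else 0) = fun _ => (0 : F) := by
        funext x; split <;> rfl
      rw [he] at h
      simpa using h.symm
    have hker : ⨅ j : {x // x ∈ R}, LinearMap.ker (Stmt10Aux.phi C (j : Fin n)) ≤
        LinearMap.ker (Stmt10Aux.phi C i) := by
      intro c hc
      simp only [Submodule.mem_iInf, LinearMap.mem_ker, Stmt10Aux.phi_apply] at hc ⊢
      have hcf := hf (c : Fin n → F) c.2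
      have : (fun x => if x ∈ R then (c : Fin n → F) x else 0) = fun _ => (0 : F) := by
        funext x
        by_cases hx : x ∈ R
        · simp [hx, hc ⟨x, hx⟩]
        · simp [hx]
      rw [this, h0] at hcf
      exact hcf
    have hmem := mem_span_of_iInf_ker_le_ker hker
    have hrange : Set.range (fun j : {x // x ∈ R} => Stmt10Aux.phi C (j : Fin n)) =
        Stmt10Aux.phi C '' ↑R := by
      rw [show (fun j : {x // x ∈ R} => Stmt10Aux.phi C (j : Fin n)) =
          Stmt10Aux.phi C ∘ Subtype.val from rfl,
        Set.range_comp, Subtype.range_coe_subtype, Finset.setOf_mem]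
    rwa [hrange] at hmem
  have hex : ∀ S : Finset (Fin n), Stmt10Aux.rk C S < k →
      ∃ i, Stmt10Aux.phi C i ∉ Submodule.span F (Stmt10Aux.phi C '' ↑S) := by
    intro S hS
    obtain ⟨c, hc0, hcv⟩ := Stmt10Aux.vanish C k hdim S hS
    have hne : ∃ i, (c : Fin n → F) i ≠ 0 := by
      by_contra h
      push_neg at h
      exact hc0 (Subtype.ext (funext h))
    obtain ⟨i, hci⟩ := hne
    exact ⟨i, fun hmem => hci (hcv _ hmem)⟩
  obtain ⟨A, m, hArfl, hAm, hmlt⟩ : ∃ A m : ℕ, (k + l - 1) / l = A ∧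
      l * A + m = k + l - 1 ∧ m < l :=
    ⟨_, _, rfl, Nat.div_add_mod _ _, Nat.mod_lt _ hl⟩
  obtain ⟨T, hT1, hT2⟩ := Stmt10Aux.main C k l hl hk hlocal hex k ∅
    (by simp [Stmt10Aux.rk_empty]) (by simp [Stmt10Aux.rk_empty])
  have hT2' : (k - 1) + A ≤ T.card + 1 := by
    have h0 : Stmt10Aux.rk C (∅ : Finset (Fin n)) = 0 := Stmt10Aux.rk_empty C
    rw [h0] at hT2
    simp only [Nat.sub_zero, Finset.card_empty] at hT2
    rw [hArfl] at hT2
    simpa using hT2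
  clear hT2 hArfl
  obtain ⟨c, hc0, hcv⟩ :=
    Stmt10Aux.vanish C k hdim T (lt_of_le_of_lt hT1 (Nat.sub_lt hk Nat.one_pos))
  have hvan : ∀ j ∈ T, (c : Fin n → F) j = 0 := fun j hj =>
    hcv _ (Submodule.subset_span (Set.mem_image_of_mem _ (by exact_mod_cast hj)))
  have hcne : (c : Fin n → F) ≠ 0 := fun h => hc0 (Subtype.ext h)
  obtain ⟨w, hwdef⟩ : ∃ w, w = (univ.filter (fun x : Fin n => (c : Fin n → F) x ≠ 0)).card :=
    ⟨_, rfl⟩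
  have hdle : d ≤ w := by
    rw [hd, hwdef]
    exact Nat.sInf_le ⟨(c : Fin n → F), c.2, hcne, rfl⟩
  have hsub : univ.filter (fun x : Fin n => (c : Fin n → F) x ≠ 0) ⊆ univ \ T := by
    intro x hx
    simp only [Finset.mem_filter, Finset.mem_univ, true_and] at hx
    simp only [Finset.mem_sdiff, Finset.mem_univ, true_and]
    intro hxT
    exact hx (hvan x hxT)
  have hTn : T.card ≤ n := by
    have := Finset.card_le_univ T
    simpa using this
  have hw : w ≤ n - T.card := by
    rw [hwdef]
    calc (univ.filter (fun x : Fin n => (c : Fin n → F) x ≠ 0)).card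
        ≤ (univ \ T).card := Finset.card_le_card hsub
      _ = n - T.card := by
          rw [Finset.card_sdiff_of_subset (Finset.subset_univ T), Finset.card_univ, Fintype.card_fin]
  have hA : ⌈(k : ℚ) / (l : ℚ)⌉ ≤ (A : ℤ) := by
    rw [Int.ceil_le]
    push_cast
    rw [div_le_iff₀ (by exact_mod_cast hl : (0:ℚ) < (l:ℚ))]
    have hkla : k ≤ l * A := by
      revert hAm hmlt
      generalize l * A = B
      intro h1 h2
      clear * - h1 h2
      omega
    rw [mul_comm]
    exact_mod_cast hkla
  have hfinal : (d : ℤ) ≤ (n : ℤ) - k + 2 - A := by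
    clear * - hdle hw hTn hT2' hk
    omega
  linarith
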